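/- Let 𝒳 ⊆ ℝ^p be a set whose complement is r-convex for some r > 0 (for every x ∈ ∂𝒳 there exists x̃ with x ∈ closedBall(x̃, r) ⊆ 𝒳). Let P_𝒳 be a probability measure on ℝ^p with P_𝒳(𝒳) = 1 that satisfies the density lower bound P_𝒳(A) ≥ p₀·λ(A) for every measurable A ⊆ 𝒳, where p₀ > 0 and λ is Lebesgue measure. Let ε, L > 0 and r⃗ = (r, 0, …, 0) ∈ ℝ^p. Then for every x ∈ ∂𝒳, P_𝒳(closedBall(x, ε/(2L))) ≥ p₀ · λ(closedBall(0, ε/(2L)) ∩ closedBall(r⃗, r)). -/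

import Mathlib

open MeasureTheory Metric

/-- **Ball-mass lower bound from r-convexity and a density lower bound.**
If the complement of `𝒳` is `r`-convex and `P𝒳 ≥ p₀·λ` on measurable subsets of `𝒳`
with `P𝒳(𝒳) = 1`, then for any boundary point `x ∈ ∂𝒳`,
`P𝒳(closedBall x (ε/(2L))) ≥ p₀ · λ(closedBall 0 (ε/(2L)) ∩ closedBall r⃗ r)`. -/
theorem measure_ball_ge_of_rconvex_density {p : ℕ} (hp : 0 < p)
    (𝒳 : Set (EuclideanSpace ℝ (Fin p)))
    (r : ℝ) (hr : 0 < r)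
    (hrconv : ∀ x' ∈ frontier 𝒳, ∃ xt,
      x' ∈ Metric.closedBall xt r ∧ Metric.closedBall xt r ⊆ 𝒳)
    (P𝒳 : Measure (EuclideanSpace ℝ (Fin p))) [IsProbabilityMeasure P𝒳]
    (hsupp : P𝒳 𝒳 = 1)
    (p₀ : ℝ) (hp₀ : 0 < p₀)
    (hdens : ∀ A ⊆ 𝒳, MeasurableSet A → ENNReal.ofReal p₀ * volume A ≤ P𝒳 A)
    (ε L : ℝ) (hε : 0 < ε) (hL : 0 < L)
    (rvec : EuclideanSpace ℝ (Fin p)) (hrvec : rvec = EuclideanSpace.single (⟨0, hp⟩ : Fin p) r)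
    (x : EuclideanSpace ℝ (Fin p)) (hx : x ∈ frontier 𝒳) :
    ENNReal.ofReal p₀ *
        volume (Metric.closedBall (0 : EuclideanSpace ℝ (Fin p)) (ε / (2 * L)) ∩
          Metric.closedBall rvec r) ≤
      P𝒳 (Metric.closedBall x (ε / (2 * L))) := by
  set δ := ε / (2 * L) with hδ
  obtain ⟨xt, hmem, hsub⟩ := hrconv x hx
  have hnotint : x ∉ interior 𝒳 := hx.2
  have hdist : dist x xt = r := by
    rcases eq_or_lt_of_le (mem_closedBall.mp hmem) with h | h
    · exact h
    · have : x ∈ interior (Metric.closedBall xt r) := by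
        rw [interior_closedBall xt hr.ne']
        exact mem_ball.mpr h
      exact absurd (interior_mono hsub this) hnotint
  set v : EuclideanSpace ℝ (Fin p) := xt - x with hv
  have hnv : ‖v‖ = r := by
    rw [hv, ← dist_eq_norm, dist_comm]
    exact hdist
  have hnrvec : ‖rvec‖ = r := by
    rw [hrvec, EuclideanSpace.norm_single, Real.norm_eq_abs, abs_of_pos hr]
  set O := Submodule.reflection (ℝ ∙ (rvec - v))ᗮ with hO
  have hOrvec : O rvec = v := Submodule.reflection_sub (hnv ▸ hnrvec)
  -- set equality
  have hset : Metric.closedBall x δ ∩ Metric.closedBall xt r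
      = (fun y => x + y) '' (⇑O '' (Metric.closedBall (0 : EuclideanSpace ℝ (Fin p)) δ
          ∩ Metric.closedBall rvec r)) := by
    ext y
    simp only [Set.mem_inter_iff, Set.mem_image, mem_closedBall, dist_eq_norm]
    constructor
    · rintro ⟨h1, h2⟩
      have h3 : O.symm v = rvec := by rw [← hOrvec, O.symm_apply_apply]
      refine ⟨O (O.symm (y - x)), ⟨O.symm (y - x), ⟨?_, ?_⟩, rfl⟩, by simp⟩
      · rw [sub_zero, O.symm.norm_map]
        exact h1
      · rw [← h3, ← map_sub, O.symm.norm_map]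
        have : y - x - v = y - xt := by rw [hv]; abel
        rw [this]
        exact h2
    · rintro ⟨w, ⟨z, ⟨h1, h2⟩, rfl⟩, rfl⟩
      constructor
      · simpa [O.norm_map] using h1
      · have : x + O z - xt = O z - v := by rw [hv]; abel
        rw [this, ← hOrvec, ← map_sub, O.norm_map]
        exact h2
  have hmeas : MeasurableSet (Metric.closedBall (0 : EuclideanSpace ℝ (Fin p)) δ
      ∩ Metric.closedBall rvec r) :=
    measurableSet_closedBall.inter measurableSet_closedBall
  have hvol : volume (Metric.closedBall x δ ∩ Metric.closedBall xt r)
      = volume (Metric.closedBall (0 : EuclideanSpace ℝ (Fin p)) δ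
          ∩ Metric.closedBall rvec r) := by
    rw [hset, Set.image_add_left, measure_preimage_add,
      Set.image_eq_preimage_of_inverse O.symm_apply_apply O.apply_symm_apply]
    exact O.symm.measurePreserving.measure_preimage hmeas.nullMeasurableSet
  calc ENNReal.ofReal p₀ * volume (Metric.closedBall (0 : EuclideanSpace ℝ (Fin p)) δ
        ∩ Metric.closedBall rvec r)
      = ENNReal.ofReal p₀ * volume (Metric.closedBall x δ ∩ Metric.closedBall xt r) := by
        rw [hvol]
    _ ≤ P𝒳 (Metric.closedBall x δ ∩ Metric.closedBall xt r) :=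
        hdens _ (Set.inter_subset_right.trans hsub)
          (measurableSet_closedBall.inter measurableSet_closedBall)
    _ ≤ P𝒳 (Metric.closedBall x δ) := measure_mono Set.inter_subset_left
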